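/- Let n be a positive integer and let λ be a real number with λ > n²π², cos(√(λ−n²π²)) ≠ 0 and F(λ) = 0. Then F has derivative at λ equal to −tanh²(√(λ+n²π²))/(λ+n²π²) + (n²π²/(λ²−n⁴π⁴))·( tanh(√(λ+n²π²))/√(λ+n²π²) − 1 ). -/

import Mathlib

open Real

lemma my_hasDerivAt_tanh (x : ℝ) :
    HasDerivAt Real.tanh (1 - Real.tanh x ^ 2) x := by
  have hc : Real.cosh x ≠ 0 := ne_of_gt (Real.cosh_pos x)
  have h := (Real.hasDerivAt_sinh x).div (Real.hasDerivAt_cosh x) hc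
  have hfun : (fun y => Real.sinh y / Real.cosh y) = Real.tanh := by
    funext y; rw [Real.tanh_eq_sinh_div_cosh]
  change HasDerivAt (fun y => Real.sinh y / Real.cosh y) _ x at h; rw [hfun] at h
  convert h using 1
  have h1 : Real.cosh x ^ 2 - Real.sinh x ^ 2 = 1 := Real.cosh_sq_sub_sinh_sq x
  rw [Real.tanh_eq_sinh_div_cosh]
  field_simp

theorem stmt_5 (n : ℕ) (hn : 0 < n) (lam : ℝ) (hlam : lam > (n : ℝ)^2 * π^2)
    (hcos : Real.cos (Real.sqrt (lam - (n : ℝ)^2 * π^2)) ≠ 0)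
    (hF : Real.tanh (Real.sqrt (lam + (n : ℝ)^2 * π^2)) / Real.sqrt (lam + (n : ℝ)^2 * π^2)
        - Real.tan (Real.sqrt (lam - (n : ℝ)^2 * π^2)) / Real.sqrt (lam - (n : ℝ)^2 * π^2) = 0) :
    HasDerivAt
      (fun l : ℝ =>
        Real.tanh (Real.sqrt (l + (n : ℝ)^2 * π^2)) / Real.sqrt (l + (n : ℝ)^2 * π^2)
          - Real.tan (Real.sqrt (l - (n : ℝ)^2 * π^2)) / Real.sqrt (l - (n : ℝ)^2 * π^2))
      (-(Real.tanh (Real.sqrt (lam + (n : ℝ)^2 * π^2)))^2 / (lam + (n : ℝ)^2 * π^2)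
        + ((n : ℝ)^2 * π^2 / (lam^2 - (n : ℝ)^4 * π^4))
          * (Real.tanh (Real.sqrt (lam + (n : ℝ)^2 * π^2)) / Real.sqrt (lam + (n : ℝ)^2 * π^2) - 1))
      lam := by
  set a : ℝ := (n : ℝ)^2 * π^2 with ha
  have hapos : 0 < a := by positivity
  have hup : (0:ℝ) < lam + a := by linarith
  have hvp : (0:ℝ) < lam - a := by linarith
  set u := Real.sqrt (lam + a) with hu
  set v := Real.sqrt (lam - a) with hv
  have hu0 : 0 < u := Real.sqrt_pos.2 hup
  have hv0 : 0 < v := Real.sqrt_pos.2 hvp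
  have hu2 : u ^ 2 = lam + a := Real.sq_sqrt hup.le
  have hv2 : v ^ 2 = lam - a := Real.sq_sqrt hvp.le
  -- derivative of inner sqrt functions
  have hs1 : HasDerivAt (fun l : ℝ => Real.sqrt (l + a)) (1 / (2 * u)) lam := by
    have := (Real.hasDerivAt_sqrt (ne_of_gt hup)).comp lam
      ((hasDerivAt_id lam).add_const a)
    simpa [Function.comp_def, ← hu] using this
  have hs2 : HasDerivAt (fun l : ℝ => Real.sqrt (l - a)) (1 / (2 * v)) lam := by
    have := (Real.hasDerivAt_sqrt (ne_of_gt hvp)).comp lam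
      ((hasDerivAt_id lam).sub_const a)
    simpa [Function.comp_def, ← hv] using this
  -- tanh ∘ sqrt and tan ∘ sqrt
  have h1 : HasDerivAt (fun l : ℝ => Real.tanh (Real.sqrt (l + a)))
      ((1 - Real.tanh u ^ 2) * (1 / (2 * u))) lam :=
    by have := (my_hasDerivAt_tanh u).comp lam hs1; exact this
  have h2 : HasDerivAt (fun l : ℝ => Real.tan (Real.sqrt (l - a)))
      ((1 / Real.cos v ^ 2) * (1 / (2 * v))) lam :=
    by have := (Real.hasDerivAt_tan hcos).comp lam hs2; exact this
  -- quotients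
  have hq1 : HasDerivAt (fun l : ℝ => Real.tanh (Real.sqrt (l + a)) / Real.sqrt (l + a))
      (((1 - Real.tanh u ^ 2) * (1 / (2 * u)) * u - Real.tanh u * (1 / (2 * u))) / u ^ 2) lam :=
    h1.div hs1 (ne_of_gt hu0)
  have hq2 : HasDerivAt (fun l : ℝ => Real.tan (Real.sqrt (l - a)) / Real.sqrt (l - a))
      (((1 / Real.cos v ^ 2) * (1 / (2 * v)) * v - Real.tan v * (1 / (2 * v))) / v ^ 2) lam :=
    h2.div hs2 (ne_of_gt hv0)
  have h := hq1.sub hq2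
  convert h using 1
  · rfl
  · rfl
  · rfl
  -- algebra
  have hFv : Real.tanh u * v = Real.tan v * u := by
    field_simp at hF
    linarith [hF]
  have htan : 1 / Real.cos v ^ 2 = 1 + Real.tan v ^ 2 := by
    rw [Real.tan_eq_sin_div_cos]
    field_simp
    exact (Real.cos_sq_add_sin_sq v).symm
  rw [htan]
  have hST : Real.tan v = Real.tanh u * v / u := by
    field_simp
    linarith [hFv]
  rw [hST]
  rw [show lam + a = u ^ 2 from hu2.symm]
  rw [show lam ^ 2 - (n:ℝ)^4 * π^4 = u ^ 2 * v ^ 2 by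
    have : a ^ 2 = (n:ℝ)^4 * π^4 := by rw [ha]; ring
    nlinarith [hu2, hv2]]
  rw [show a = (u ^ 2 - v ^ 2) / 2 by rw [hu2, hv2]; ring]
  field_simp
  ring
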